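/- For every round r, all energies are nonnegative (e_i^r ≥ 0 for every node i); consequently the leader's energy is non-decreasing in r (e_ℓ^{r+1} ≥ e_ℓ^r for all r) and satisfies e_ℓ^r ≤ n - 1 for every round r. -/

import Mathlib

/-- For every round `r`, all energies are nonnegative; consequently the
leader's energy is non-decreasing in `r` and satisfies `e_ℓ^r ≤ n - 1` for every round `r`. -/
theorem energy_nonneg_leader_mono_le
    {V : Type*} [Fintype V] [DecidableEq V]
    (n : ℕ) (hn : 2 ≤ n) (hcard : Fintype.card V = n)
    (ℓ : V) (G : ℕ → SimpleGraph V) [∀ r, DecidableRel (G r).Adj]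
    (Δ : ℕ) (hΔ : 1 ≤ Δ)
    (hdeg : ∀ r v, (G r).degree v ≤ Δ)
    (e : ℕ → V → ℝ)
    (h0ℓ : e 0 ℓ = 0)
    (h0 : ∀ i, i ≠ ℓ → e 0 i = 1)
    (hstep : ∀ r i, i ≠ ℓ →
      e (r + 1) i = e r i * (1 - ((G r).degree i : ℝ) / (2 * Δ))
        + (1 / (2 * Δ)) * ∑ j ∈ ((G r).neighborFinset i).filter (fun j => j ≠ ℓ), e r j)
    (hstepℓ : ∀ r,
      e (r + 1) ℓ = e r ℓ + (1 / (2 * Δ)) * ∑ j ∈ (G r).neighborFinset ℓ, e r j) :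
    (∀ r, ∀ i, 0 ≤ e r i) ∧ (∀ r, e r ℓ ≤ e (r + 1) ℓ) ∧ (∀ r, e r ℓ ≤ (n : ℝ) - 1) := by
  have hΔpos : (0:ℝ) < 2 * Δ := by
    have : (1:ℝ) ≤ Δ := by exact_mod_cast hΔ
    linarith
  have hcnn : (0:ℝ) ≤ 1 / (2 * Δ) := by positivity
  -- nonnegativity
  have hnn : ∀ r i, 0 ≤ e r i := by
    intro r
    induction r with
    | zero =>
      intro i
      by_cases hi : i = ℓ
      · simp [hi, h0ℓ]
      · rw [h0 i hi]; norm_num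
    | succ r ih =>
      intro i
      by_cases hi : i = ℓ
      · rw [hi, hstepℓ r]
        have : 0 ≤ ∑ j ∈ (G r).neighborFinset ℓ, e r j :=
          Finset.sum_nonneg fun j _ => ih j
        have := mul_nonneg hcnn this
        linarith [ih ℓ]
      · rw [hstep r i hi]
        have hd : ((G r).degree i : ℝ) ≤ Δ := by exact_mod_cast hdeg r i
        have h1 : 0 ≤ 1 - ((G r).degree i : ℝ) / (2 * Δ) := by
          rw [sub_nonneg, div_le_one hΔpos]
          have : (1:ℝ) ≤ Δ := by exact_mod_cast hΔ
          linarith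
        have h2 : 0 ≤ ∑ j ∈ ((G r).neighborFinset i).filter (fun j => j ≠ ℓ), e r j :=
          Finset.sum_nonneg fun j _ => ih j
        exact add_nonneg (mul_nonneg (ih i) h1) (mul_nonneg hcnn h2)
  refine ⟨hnn, ?_, ?_⟩
  · intro r
    rw [hstepℓ r]
    have : 0 ≤ ∑ j ∈ (G r).neighborFinset ℓ, e r j :=
      Finset.sum_nonneg fun j _ => hnn r j
    nlinarith
  -- sum conservation
  have key : ∀ r, ∑ i ∈ Finset.univ.erase ℓ,
        (∑ j ∈ ((G r).neighborFinset i).filter (fun j => j ≠ ℓ), e r j)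
        + ∑ j ∈ (G r).neighborFinset ℓ, e r j
      = ∑ i ∈ Finset.univ.erase ℓ, ((G r).degree i : ℝ) * e r i := by
    intro r
    have hℓterm : ∑ j ∈ ((G r).neighborFinset ℓ).filter (fun j => j ≠ ℓ), e r j
        = ∑ j ∈ (G r).neighborFinset ℓ, e r j := by
      apply Finset.sum_congr _ (fun _ _ => rfl)
      apply Finset.filter_true_of_mem
      intro j hj hje
      rw [SimpleGraph.mem_neighborFinset] at hj
      exact (G r).loopless.irrefl ℓ (by rwa [hje] at hj)
    have step1 : ∑ i ∈ Finset.univ.erase ℓ,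
          (∑ j ∈ ((G r).neighborFinset i).filter (fun j => j ≠ ℓ), e r j)
          + ∑ j ∈ (G r).neighborFinset ℓ, e r j
        = ∑ i : V, ∑ j ∈ ((G r).neighborFinset i).filter (fun j => j ≠ ℓ), e r j := by
      rw [← hℓterm, Finset.sum_erase_add _ _ (Finset.mem_univ ℓ)]
    rw [step1]
    have inner : ∀ i : V, ∑ j ∈ ((G r).neighborFinset i).filter (fun j => j ≠ ℓ), e r j
        = ∑ j : V, if (G r).Adj i j ∧ j ≠ ℓ then e r j else 0 := by
      intro i
      rw [show ((G r).neighborFinset i).filter (fun j => j ≠ ℓ)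
          = Finset.univ.filter (fun j => (G r).Adj i j ∧ j ≠ ℓ) from by
        ext j; simp [SimpleGraph.mem_neighborFinset]]
      rw [Finset.sum_filter]
    simp_rw [inner]
    rw [Finset.sum_comm]
    have outer : ∀ j : V, ∑ i : V, (if (G r).Adj i j ∧ j ≠ ℓ then e r j else 0)
        = (if j ≠ ℓ then ((G r).degree j : ℝ) * e r j else 0) := by
      intro j
      by_cases hj : j = ℓ
      · simp [hj]
      · simp only [hj, if_pos (hj : j ≠ ℓ)]
        have : ∀ i : V, (if (G r).Adj i j ∧ j ≠ ℓ then e r j else 0)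
            = (if i ∈ (G r).neighborFinset j then e r j else 0) := by
          intro i
          simp [SimpleGraph.mem_neighborFinset, hj, SimpleGraph.adj_comm]
        simp_rw [this]
        rw [Finset.sum_ite_mem, Finset.univ_inter, Finset.sum_const,
          SimpleGraph.card_neighborFinset_eq_degree, nsmul_eq_mul]
    simp_rw [outer]
    rw [← Finset.sum_filter, Finset.filter_ne']
  have hsum : ∀ r, ∑ i : V, e r i = (n : ℝ) - 1 := by
    intro r
    induction r with
    | zero =>
      rw [← Finset.sum_erase_add _ _ (Finset.mem_univ ℓ), h0ℓ, add_zero]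
      rw [Finset.sum_congr rfl (fun i hi => h0 i (Finset.mem_erase.mp hi).1)]
      rw [Finset.sum_const, Finset.card_erase_of_mem (Finset.mem_univ ℓ),
        Finset.card_univ, hcard]
      have h1 : (1:ℕ) ≤ n := by omega
      rw [nsmul_eq_mul, mul_one, Nat.cast_sub h1, Nat.cast_one]
    | succ r ih =>
      rw [← ih]
      rw [← Finset.sum_erase_add Finset.univ (e (r+1)) (Finset.mem_univ ℓ),
        ← Finset.sum_erase_add Finset.univ (e r) (Finset.mem_univ ℓ)]
      rw [hstepℓ r]
      rw [Finset.sum_congr rfl (fun i hi => hstep r i (Finset.mem_erase.mp hi).1)]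
      rw [Finset.sum_add_distrib, ← Finset.mul_sum]
      have hk := key r
      have expand : ∑ i ∈ Finset.univ.erase ℓ, e r i * (1 - ((G r).degree i : ℝ) / (2 * Δ))
          = ∑ i ∈ Finset.univ.erase ℓ, e r i
            - (1 / (2 * Δ)) * ∑ i ∈ Finset.univ.erase ℓ, ((G r).degree i : ℝ) * e r i := by
        rw [Finset.mul_sum, ← Finset.sum_sub_distrib]
        apply Finset.sum_congr rfl
        intro i _
        field_simp
      rw [expand, ← hk]
      ring
  refine fun r => ?_
  have := Finset.single_le_sum (f := e r) (fun i _ => hnn r i) (Finset.mem_univ ℓ)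
  rw [hsum r] at this
  exact this
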